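/- Let φ be a continuous function on the unit disc 𝔻, let f be holomorphic on 𝔻 with |f(0)| = 1, and let 0 < t < 1. Then the function s ↦ ∫_𝕋 φ(se^{iθ}) log⁻|f(se^{iθ})| dθ is continuous on [0, t]. -/

import Mathlib

open MeasureTheory Metric Complex Set ENNReal
open scoped Classical

noncomputable section

/-- positive part of the logarithm: `log⁺ t = max (log t) 0`. -/
def logPlus (t : ℝ) : ℝ := max (Real.log t) 0

/-- negative part of the logarithm: `log⁻ t = max (-log t) 0`. -/
def logMinus (t : ℝ) : ℝ := max (-Real.log t) 0

/-- `|R(z)| = ∏ j |z - η j| ^ (q j)`. -/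
def Rabs {n : ℕ} (η : Fin n → ℂ) (q : Fin n → ℝ) (z : ℂ) : ℝ :=
  ∏ j, ‖z - η j‖ ^ q j

/-- Laplacian of a real valued function on `ℂ`:
`Δg(z) = ∂²g/∂x²(z) + ∂²g/∂y²(z)`. -/
def lap (g : ℂ → ℝ) (z : ℂ) : ℝ :=
  iteratedDeriv 2 (fun t : ℝ => g (z + (t : ℂ))) 0 +
  iteratedDeriv 2 (fun t : ℝ => g (z + (t : ℂ) * Complex.I)) 0

/-- the order of vanishing of `f` at `a` (0 if `f` is not analytic at `a`). -/
def zeroOrder (f : ℂ → ℂ) (a : ℂ) : ℕ :=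
  if h : AnalyticAt ℂ f a then (analyticOrderAt f a).toNat else 0

/-- the sum, over the zeros `a` of `f` in the unit disc counted with multiplicity,
of the weight `w a`, computed in `ℝ≥0∞`. -/
def zeroSum (f : ℂ → ℂ) (w : ℂ → ℝ) : ℝ≥0∞ :=
  ∑' a : (ball (0 : ℂ) 1 : Set ℂ), (zeroOrder f a : ℝ≥0∞) * ENNReal.ofReal (w a)

/-- `M(ρ) = sup_θ |R(ρ e^{iθ})|²`. -/
def Msup {n : ℕ} (η : Fin n → ℂ) (q : Fin n → ℝ) (ρ : ℝ) : ℝ :=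
  ⨆ θ : ℝ, (Rabs η q ((ρ : ℂ) * Complex.exp ((θ : ℂ) * Complex.I))) ^ 2

/-- `m(ρ) = inf_θ |R(ρ e^{iθ})|²`. -/
def minf {n : ℕ} (η : Fin n → ℂ) (q : Fin n → ℝ) (ρ : ℝ) : ℝ :=
  ⨅ θ : ℝ, (Rabs η q ((ρ : ℂ) * Complex.exp ((θ : ℂ) * Complex.I))) ^ 2

/-- `c(δ,u) = sup_{0≤s<1} sup_{0≤ρ<u} (M(sρ)/m(sρ)) (1-ρ²)^δ`. -/
def cconst {n : ℕ} (η : Fin n → ℂ) (q : Fin n → ℝ) (δ u : ℝ) : ℝ :=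
  ⨆ s : (Ico (0:ℝ) 1 : Set ℝ), ⨆ ρ : (Ico (0:ℝ) u : Set ℝ),
    (Msup η q ((s : ℝ) * (ρ : ℝ)) / minf η q ((s : ℝ) * (ρ : ℝ))) * (1 - (ρ : ℝ) ^ 2) ^ δ



section Aux
open Filter Topology

lemma logMinus_nonneg (x : ℝ) : 0 ≤ logMinus x := le_max_right _ _

lemma logMinus_zero : logMinus 0 = 0 := by simp [logMinus]

lemma logMinus_mul {x y : ℝ} (hx : x ≠ 0) (hy : y ≠ 0) :
    logMinus (x * y) ≤ logMinus x + logMinus y := by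
  unfold logMinus
  rw [Real.log_mul hx hy]
  apply max_le
  · have h1 : -Real.log x ≤ max (-Real.log x) 0 := le_max_left _ _
    have h2 : -Real.log y ≤ max (-Real.log y) 0 := le_max_left _ _
    linarith
  · positivity

lemma logMinus_pow (x : ℝ) (m : ℕ) : logMinus (x ^ m) = m * logMinus x := by
  unfold logMinus
  rw [Real.log_pow]
  rw [show -((m : ℝ) * Real.log x) = (m : ℝ) * (-Real.log x) by ring,
    show (0 : ℝ) = (m : ℝ) * 0 by ring, ← mul_max_of_nonneg _ _ (by positivity : (0:ℝ) ≤ (m:ℝ))]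
  ring_nf

lemma logMinus_anti {x y : ℝ} (hx : 0 < x) (hxy : x ≤ y) : logMinus y ≤ logMinus x :=
  max_le_max (neg_le_neg (Real.log_le_log hx hxy)) le_rfl

lemma logMinus_abs_sin (x : ℝ) : logMinus |Real.sin x| = -Real.log |Real.sin x| :=
  max_eq_left (neg_nonneg.mpr (Real.log_nonpos (abs_nonneg _) (abs_le.mpr ⟨Real.neg_one_le_sin x, Real.sin_le_one x⟩)))

lemma intervalIntegrable_log_abs (a b : ℝ) :
    IntervalIntegrable (fun x => Real.log |x|) volume a b := by
  suffices h : ∀ c : ℝ, IntervalIntegrable (fun x => Real.log |x|) volume 0 c by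
    exact (h a).symm.trans (h b)
  have key : ∀ c : ℝ, 0 ≤ c → IntervalIntegrable (fun x => Real.log |x|) volume 0 c := by
    intro c hc
    have hbnd : IntervalIntegrable (fun x : ℝ => 2 * x ^ (-(1:ℝ)/2) + x) volume 0 c :=
      ((intervalIntegral.intervalIntegrable_rpow' (by norm_num)).const_mul 2).add intervalIntegral.intervalIntegrable_id
    refine hbnd.mono_fun ((Real.measurable_log.comp measurable_abs).aestronglyMeasurable) ?_
    refine ae_restrict_of_forall_mem measurableSet_uIoc fun x hx => ?_
    rw [uIoc_of_le hc] at hx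
    have hx0 : 0 < x := hx.1
    have h1 : -Real.log x = 2 * Real.log (x ^ (-(1:ℝ)/2)) := by
      rw [Real.log_rpow hx0]; ring
    have h2 : Real.log (x ^ (-(1:ℝ)/2)) ≤ x ^ (-(1:ℝ)/2) :=
      Real.log_le_self (Real.rpow_nonneg hx0.le _)
    have h3 : Real.log x ≤ x := (Real.log_le_sub_one_of_pos hx0).trans (by linarith)
    have hrpos : (0:ℝ) ≤ x ^ (-(1:ℝ)/2) := Real.rpow_nonneg hx0.le _
    have hR : (0:ℝ) ≤ 2 * x ^ (-(1:ℝ)/2) + x := by positivity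
    simp only [Real.norm_eq_abs]
    rw [_root_.abs_of_pos hx0, _root_.abs_of_nonneg hR, abs_le]
    constructor <;> nlinarith
  intro c
  rcases le_total 0 c with hc | hc
  · exact key c hc
  · have := ((IntervalIntegrable.iff_comp_neg (by simp)).mp (key (-c) (by linarith)))
    simpa using this
lemma round_pi_dist (θ : ℝ) : |θ - (round (θ/Real.pi) : ℝ) * Real.pi| ≤ Real.pi/2 := by
  have hπ := Real.pi_pos
  have hd : |θ/Real.pi - round (θ/Real.pi)| ≤ 1/2 := abs_sub_round _
  have h2 : θ - (round (θ/Real.pi) : ℝ) * Real.pi = (θ/Real.pi - round (θ/Real.pi)) * Real.pi := by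
    field_simp
  rw [h2, abs_mul, abs_of_pos hπ]
  nlinarith

lemma sin_lower (θ : ℝ) :
    2/Real.pi * |θ - (round (θ/Real.pi) : ℝ) * Real.pi| ≤ |Real.sin θ| := by
  set n := round (θ/Real.pi) with hn
  have hd' := round_pi_dist θ
  have hsin : Real.sin θ = (-1)^n * Real.sin (θ - n*Real.pi) := by
    have h := Real.sin_add_int_mul_pi (θ - n*Real.pi) n
    rw [sub_add_cancel] at h
    exact h
  have habs : |Real.sin θ| = |Real.sin (θ - n*Real.pi)| := by
    rw [hsin, abs_mul]
    have h1 : |((-1:ℝ))^n| = 1 := by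
      rcases Int.even_or_odd n with he | ho
      · rw [he.neg_one_zpow]; simp
      · rw [Odd.neg_one_zpow ho]; simp
    rw [h1, one_mul]
  rw [habs]
  exact Real.mul_abs_le_abs_sin hd'

set_option maxHeartbeats 1000000 in
lemma logsin_small {a b : ℝ} (hab : a ≤ b) (hlen : b - a ≤ Real.pi/2) :
    IntervalIntegrable (fun θ => Real.log |Real.sin θ|) volume a b := by
  have hπ := Real.pi_pos
  set n₁ : ℤ := ⌈a/Real.pi - 1/2⌉ with hn₁
  set p₁ : ℝ := (n₁ : ℝ) * Real.pi with hp₁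
  set p₂ : ℝ := ((n₁ : ℝ) + 1) * Real.pi with hp₂
  have hlog1 : IntervalIntegrable (fun θ => Real.log |θ - p₁|) volume a b := by
    have := (intervalIntegrable_log_abs (a - p₁) (b - p₁)).comp_sub_right p₁
    simpa using this
  have hlog2 : IntervalIntegrable (fun θ => Real.log |θ - p₂|) volume a b := by
    have := (intervalIntegrable_log_abs (a - p₂) (b - p₂)).comp_sub_right p₂
    simpa using this
  have hbnd : IntervalIntegrable
      (fun θ => 2 * Real.log Real.pi + (|Real.log (|θ - p₁|)| + |Real.log (|θ - p₂|)|)) volume a b :=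
    intervalIntegrable_const.add (hlog1.abs.add hlog2.abs)
  refine hbnd.mono_fun ((Real.measurable_log.comp Real.measurable_sin.abs).aestronglyMeasurable) ?_
  refine ae_restrict_of_forall_mem measurableSet_uIoc fun θ hθ => ?_
  rw [Set.uIoc_of_le hab] at hθ
  have hθa : a ≤ θ := le_of_lt hθ.1
  have hθb : θ ≤ b := hθ.2
  have hlogpi : 0 ≤ Real.log Real.pi := Real.log_nonneg (by linarith [Real.pi_gt_three])
  have hRnonneg : 0 ≤ 2 * Real.log Real.pi + (|Real.log (|θ - p₁|)| + |Real.log (|θ - p₂|)|) := by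
    have := abs_nonneg (Real.log |θ - p₁|)
    have := abs_nonneg (Real.log |θ - p₂|)
    linarith
  show ‖Real.log |Real.sin θ|‖ ≤ ‖2 * Real.log Real.pi + (|Real.log (|θ - p₁|)| + |Real.log (|θ - p₂|)|)‖
  rw [Real.norm_eq_abs, Real.norm_eq_abs, _root_.abs_of_nonneg hRnonneg]
  by_cases hs : Real.sin θ = 0
  · simpa [hs] using hRnonneg
  set n : ℤ := round (θ/Real.pi) with hnn
  set q : ℝ := (n : ℝ) * Real.pi with hqd
  have hq := sin_lower θ
  have hd' := round_pi_dist θ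
  rw [← hqd] at hq hd'
  have h1 := abs_le.mp (abs_sub_round (θ/Real.pi))
  have hceil_le : (n₁ : ℝ) ≤ a/Real.pi + 1/2 := by
    have := Int.ceil_le_floor_add_one (a/Real.pi - 1/2)
    have h3 : ((n₁:ℝ)) ≤ (a/Real.pi - 1/2) + 1 := by
      have := Int.ceil_lt_add_one (a/Real.pi - 1/2)
      linarith
    linarith
  have hle_ceil : a/Real.pi - 1/2 ≤ (n₁ : ℝ) := Int.le_ceil _
  have haθ : a/Real.pi ≤ θ/Real.pi := by gcongr
  have hθbπ : θ/Real.pi ≤ b/Real.pi := by gcongr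
  have hba : b/Real.pi ≤ a/Real.pi + 1/2 := by
    have h4 : (b-a)/Real.pi ≤ 1/2 := by
      rw [div_le_iff₀ hπ]; linarith
    have h5 : (b-a)/Real.pi = b/Real.pi - a/Real.pi := by ring
    linarith
  have hn_ge : n₁ ≤ n := Int.ceil_le.mpr (by linarith)
  have hn_le : n ≤ n₁ + 1 := by
    have hcast : (n : ℝ) < (n₁ : ℝ) + 2 := by linarith
    have : n < n₁ + 2 := by exact_mod_cast hcast
    omega
  have hcase : n = n₁ ∨ n = n₁ + 1 := by omega
  have hθ1 : θ ≠ p₁ := by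
    intro h
    exact hs (by rw [h, hp₁]; exact Real.sin_int_mul_pi n₁)
  have hθ2 : θ ≠ p₂ := by
    intro h
    apply hs
    rw [h, hp₂]
    have : ((n₁:ℝ) + 1) = ((n₁ + 1 : ℤ) : ℝ) := by push_cast; ring
    rw [this]
    exact Real.sin_int_mul_pi (n₁ + 1)
  have hd₁pos : 0 < |θ - p₁| := abs_pos.mpr (sub_ne_zero.mpr hθ1)
  have hd₂pos : 0 < |θ - p₂| := abs_pos.mpr (sub_ne_zero.mpr hθ2)
  have hq_eq : q = p₁ ∨ q = p₂ := by
    rcases hcase with h | h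
    · left; rw [hqd, hp₁, h]
    · right; rw [hqd, hp₂, h]; push_cast; ring
  have hqp1 : |q - p₁| ≤ Real.pi := by
    rcases hq_eq with h | h <;> rw [h]
    · rw [sub_self, abs_zero]; linarith
    · rw [hp₂, hp₁, show ((n₁:ℝ)+1)*Real.pi - (n₁:ℝ)*Real.pi = Real.pi by ring, abs_of_pos hπ]
  have hqp2 : |q - p₂| ≤ Real.pi := by
    rcases hq_eq with h | h <;> rw [h]
    · rw [hp₂, hp₁, show (n₁:ℝ)*Real.pi - ((n₁:ℝ)+1)*Real.pi = -Real.pi by ring, abs_neg,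
        abs_of_pos hπ]
    · rw [sub_self, abs_zero]; linarith
  have hb1 : |θ - p₁| ≤ 2*Real.pi := by
    have := abs_sub_le θ q p₁
    linarith
  have hb2 : |θ - p₂| ≤ 2*Real.pi := by
    have := abs_sub_le θ q p₂
    linarith
  have hprod : |θ - p₁| * |θ - p₂| ≤ 2*Real.pi*|θ - q| := by
    rcases hq_eq with h | h
    · rw [← h]; nlinarith [abs_nonneg (θ - q)]
    · rw [← h]; nlinarith [abs_nonneg (θ - q)]
  have hq' : 2 * |θ - q| ≤ |Real.sin θ| * Real.pi := by
    rw [div_mul_eq_mul_div, div_le_iff₀ hπ] at hq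
    linarith
  have hsin_ge : |θ - p₁| * |θ - p₂| / Real.pi^2 ≤ |Real.sin θ| := by
    rw [div_le_iff₀ (by positivity)]
    have h5 := mul_le_mul_of_nonneg_left hq' hπ.le
    nlinarith [hprod]
  have hlog_le : Real.log (|θ - p₁| * |θ - p₂| / Real.pi^2) ≤ Real.log |Real.sin θ| :=
    Real.log_le_log (by positivity) hsin_ge
  have hexp : Real.log (|θ - p₁| * |θ - p₂| / Real.pi^2) =
      Real.log |θ - p₁| + Real.log |θ - p₂| - 2 * Real.log Real.pi := by
    rw [Real.log_div (by positivity) (by positivity),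
      Real.log_mul (ne_of_gt hd₁pos) (ne_of_gt hd₂pos), Real.log_pow]
    push_cast; ring
  have hsinlog : Real.log |Real.sin θ| ≤ 0 :=
    Real.log_nonpos (abs_nonneg _) (abs_le.mpr ⟨Real.neg_one_le_sin θ, Real.sin_le_one θ⟩)
  rw [abs_of_nonpos hsinlog]
  have := neg_abs_le (Real.log |θ - p₁|)
  have := neg_abs_le (Real.log |θ - p₂|)
  linarith

lemma intervalIntegrable_log_abs_sin (a b : ℝ) :
    IntervalIntegrable (fun θ => Real.log |Real.sin θ|) volume a b := by
  have hπ := Real.pi_gt_three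
  have step : ∀ (n : ℕ) (a : ℝ),
      IntervalIntegrable (fun θ => Real.log |Real.sin θ|) volume a (a + n) := by
    intro n
    induction n with
    | zero => intro a; simp
    | succ n ih =>
      intro a
      have h1 : IntervalIntegrable (fun θ => Real.log |Real.sin θ|) volume (a + n) (a + n + 1) :=
        logsin_small (by linarith) (by linarith)
      have h2 := (ih a).trans h1
      have h3 : a + (n:ℝ) + 1 = a + ((n+1 : ℕ) : ℝ) := by push_cast; ring
      rwa [h3] at h2
  have main : ∀ a b : ℝ, a ≤ b →
      IntervalIntegrable (fun θ => Real.log |Real.sin θ|) volume a b := by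
    intro a b hab
    have hn : b ≤ a + ⌈b - a⌉₊ := by
      have := Nat.le_ceil (b - a)
      linarith
    exact (step ⌈b - a⌉₊ a).mono_set
      (Set.uIcc_subset_uIcc (by rw [Set.mem_uIcc]; left; constructor <;> linarith)
        (by rw [Set.mem_uIcc]; left; exact ⟨hab, hn⟩))
  rcases le_total a b with h | h
  · exact main a b h
  · exact (main b a h).symm

lemma continuousAt_logMinus {x : ℝ} (hx : x ≠ 0) : ContinuousAt logMinus x := by
  have : ContinuousAt (fun y : ℝ => max (-Real.log y) 0) x :=
    ((Real.continuousAt_log hx).neg).max continuousAt_const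
  exact this

lemma local_bound {f : ℂ → ℂ} (hf : DifferentiableOn ℂ f (ball 0 1)) (hf0 : f 0 ≠ 0)
    (a : ℂ) (ha : a ∈ ball (0:ℂ) 1) :
    ∃ r c : ℝ, ∃ m : ℕ, 0 < r ∧ 0 < c ∧ (m ≠ 0 → f a = 0) ∧
      ∀ z ∈ ball a r, c * ‖z - a‖ ^ m ≤ ‖f z‖ := by
  have han : AnalyticOnNhd ℂ f (ball 0 1) := hf.analyticOnNhd isOpen_ball
  have hA : AnalyticAt ℂ f a := han a ha
  have hnz : ¬ (∀ᶠ z in 𝓝 a, f z = 0) := by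
    intro h
    have := han.eqOn_zero_of_preconnected_of_eventuallyEq_zero
      (convex_ball (0:ℂ) 1).isPreconnected ha h
    exact hf0 (this (mem_ball_self one_pos))
  have horder : analyticOrderAt f a ≠ ⊤ := fun h => hnz (analyticOrderAt_eq_top.mp h)
  obtain ⟨m, hm⟩ := WithTop.ne_top_iff_exists.mp horder
  obtain ⟨g, hg, hg0, hfg⟩ := (hA.analyticOrderAt_eq_natCast).mp hm.symm
  have hga : 0 < ‖g a‖ := by
    simpa [norm_pos_iff] using hg0
  have h2 : ∀ᶠ z in 𝓝 a, ‖g a‖ / 2 ≤ ‖g z‖ := by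
    have hball : ∀ᶠ z in 𝓝 a, g z ∈ ball (g a) (‖g a‖ / 2) :=
      hg.continuousAt (ball_mem_nhds _ (by positivity))
    filter_upwards [hball] with z hz
    have hd : ‖g z - g a‖ < ‖g a‖ / 2 := by
      simpa [mem_ball, Complex.dist_eq] using hz
    have h3 : ‖g a‖ - ‖g z‖ ≤ ‖g a - g z‖ := by
      simpa using norm_sub_norm_le (g a) (g z)
    have h4 : ‖g a - g z‖ = ‖g z - g a‖ := by
      rw [← norm_neg, neg_sub]
    linarith
  have hcomb := hfg.and h2
  obtain ⟨r, hr, hcl⟩ := Metric.eventually_nhds_iff.mp hcomb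
  refine ⟨r, ‖g a‖ / 2, m, hr, by positivity, ?_, ?_⟩
  · intro hm0
    have hself := hfg.self_of_nhds
    rw [hself, sub_self, zero_pow hm0, zero_smul]
  · intro z hz
    obtain ⟨heq, hge⟩ := hcl (mem_ball.mp hz)
    rw [heq, smul_eq_mul, norm_mul, norm_pow]
    calc ‖g a‖ / 2 * ‖z - a‖ ^ m
        ≤ ‖g z‖ * ‖z - a‖ ^ m := by
          apply mul_le_mul_of_nonneg_right hge (by positivity)
      _ = ‖z - a‖ ^ m * ‖g z‖ := by ring

lemma global_bound {f : ℂ → ℂ} (hf : DifferentiableOn ℂ f (ball 0 1)) (hf0 : f 0 ≠ 0)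
    {t : ℝ} (ht0 : 0 < t) (ht1 : t < 1) :
    ∃ (S : Finset ℂ) (m : ℂ → ℕ) (C : ℝ), 0 ≤ C ∧
      (∀ a ∈ S, m a ≠ 0 → a ≠ 0) ∧
      (∀ z ∈ closedBall (0:ℂ) t, f z = 0 → z ∈ S) ∧
      ∀ z ∈ closedBall (0:ℂ) t,
        logMinus (‖f z‖) ≤ C + ∑ a ∈ S, (m a : ℝ) * logMinus (‖z - a‖) := by
  have hKb : closedBall (0:ℂ) t ⊆ ball (0:ℂ) 1 := closedBall_subset_ball ht1
  have hch : ∀ a : ℂ, ∃ r c : ℝ, ∃ m : ℕ, 0 < r ∧ 0 < c ∧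
      (m ≠ 0 → a ≠ 0 ∧ f a = 0) ∧
      (a ∈ closedBall (0:ℂ) t →
        ∀ z ∈ ball a r, c * ‖z - a‖ ^ m ≤ ‖f z‖) := by
    intro a
    by_cases ha : a ∈ closedBall (0:ℂ) t
    · obtain ⟨r, c, m, hr, hc, hm, hb⟩ := local_bound hf hf0 a (hKb ha)
      refine ⟨r, c, m, hr, hc, fun h => ⟨?_, hm h⟩, fun _ => hb⟩
      intro h0
      exact hf0 (h0 ▸ hm h)
    · exact ⟨1, 1, 0, one_pos, one_pos, fun h => absurd rfl h, fun h => absurd h ha⟩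
  choose r c m hr hc hm0 hb using hch
  obtain ⟨S, hSK, hScov⟩ := (isCompact_closedBall (0:ℂ) t).elim_nhds_subcover
    (fun a => ball a (r a)) (fun a _ => ball_mem_nhds a (hr a))
  refine ⟨S, m, ∑ a ∈ S, logMinus (c a), Finset.sum_nonneg (fun a _ => logMinus_nonneg _),
    fun a ha hma => (hm0 a hma).1, ?_, ?_⟩
  · intro z hz hfz
    obtain ⟨a, haS, hza⟩ := Set.mem_iUnion₂.mp (hScov hz)
    have hzb := hb a (hSK a haS) z hza
    rw [hfz, norm_zero] at hzb
    have hm : m a ≠ 0 := by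
      intro h
      rw [h, pow_zero, mul_one] at hzb
      linarith [hc a]
    have : ‖z - a‖ ^ m a ≤ 0 := by
      nlinarith [hc a, pow_nonneg (norm_nonneg (z - a)) (m a)]
    have h4 : ‖z - a‖ = 0 := by
      by_contra h5
      have h6 : 0 < ‖z - a‖ := lt_of_le_of_ne (norm_nonneg _) (Ne.symm h5)
      nlinarith [pow_pos h6 (m a)]
    have hza' : z = a := sub_eq_zero.mp (norm_eq_zero.mp h4)
    rwa [hza']
  · intro z hz
    obtain ⟨a, haS, hza⟩ := Set.mem_iUnion₂.mp (hScov hz)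
    have hzb := hb a (hSK a haS) z hza
    have hsum_nonneg : (0:ℝ) ≤ ∑ a ∈ S, (m a : ℝ) * logMinus (‖z - a‖) :=
      Finset.sum_nonneg fun a _ => mul_nonneg (Nat.cast_nonneg _) (logMinus_nonneg _)
    have hC_nonneg : (0:ℝ) ≤ ∑ a ∈ S, logMinus (c a) :=
      Finset.sum_nonneg fun a _ => logMinus_nonneg _
    by_cases hfz : f z = 0
    · rw [hfz, norm_zero, logMinus_zero]
      linarith
    have hfzpos : 0 < ‖f z‖ := by
      simpa [norm_pos_iff] using hfz
    have hcS : logMinus (c a) ≤ ∑ a ∈ S, logMinus (c a) :=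
      Finset.single_le_sum (f := fun b => logMinus (c b)) (fun b _ => logMinus_nonneg (c b)) haS
    by_cases hzaeq : z = a
    · rcases Nat.eq_zero_or_pos (m a) with hma | hma
      · rw [hma, pow_zero, mul_one] at hzb
        have := logMinus_anti (hc a) hzb
        linarith
      · exfalso
        exact hfz (hzaeq ▸ (hm0 a hma.ne').2)
    · have hzapos : 0 < ‖z - a‖ := by
        simpa [norm_pos_iff, sub_ne_zero] using hzaeq
      have hlhs : logMinus (‖f z‖) ≤
          logMinus (c a * ‖z - a‖ ^ m a) :=
        logMinus_anti (mul_pos (hc a) (pow_pos hzapos _)) hzb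
      have hmul : logMinus (c a * ‖z - a‖ ^ m a) ≤
          logMinus (c a) + logMinus (‖z - a‖ ^ m a) :=
        logMinus_mul (ne_of_gt (hc a)) (pow_pos hzapos _).ne'
      rw [logMinus_pow] at hmul
      have hterm : (m a : ℝ) * logMinus (‖z - a‖) ≤
          ∑ a ∈ S, (m a : ℝ) * logMinus (‖z - a‖) :=
        Finset.single_le_sum (f := fun b => (m b : ℝ) * logMinus (‖z - b‖))
          (fun b _ => mul_nonneg (Nat.cast_nonneg _) (logMinus_nonneg _)) haS
      linarith

theorem stmt_16 (φ : ℂ → ℝ) (hφ : ContinuousOn φ (ball (0 : ℂ) 1))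
    (f : ℂ → ℂ) (hf : DifferentiableOn ℂ f (ball 0 1)) (hf0 : ‖f 0‖ = 1)
    (t : ℝ) (ht0 : 0 < t) (ht1 : t < 1) :
    ContinuousOn
      (fun s : ℝ => ∫ θ in (0 : ℝ)..(2 * Real.pi),
        φ ((s : ℂ) * Complex.exp ((θ : ℂ) * Complex.I)) *
          logMinus (‖f ((s : ℂ) * Complex.exp ((θ : ℂ) * Complex.I))‖))
      (Icc 0 t) := by
  have hπ := Real.pi_pos
  have hf0' : f 0 ≠ 0 := by
    intro h
    rw [h, norm_zero] at hf0
    norm_num at hf0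
  have hKb : closedBall (0:ℂ) t ⊆ ball (0:ℂ) 1 := closedBall_subset_ball ht1
  obtain ⟨S, m, C, hC0, hS0, hSz, hSbound⟩ := global_bound hf hf0' ht0 ht1
  obtain ⟨B, hB⟩ := (isCompact_closedBall (0:ℂ) t).exists_bound_of_continuousOn (hφ.mono hKb)
  have hB0 : 0 ≤ B := le_trans (norm_nonneg _) (hB 0 (mem_closedBall_self ht0.le))
  have hmemK : ∀ s : ℝ, s ∈ Icc (0:ℝ) t → ∀ θ : ℝ,
      ((s:ℂ) * Complex.exp ((θ:ℂ) * Complex.I)) ∈ closedBall (0:ℂ) t := by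
    intro s hs θ
    rw [mem_closedBall, Complex.dist_eq, sub_zero, norm_mul, Complex.norm_exp_ofReal_mul_I,
      mul_one, Complex.norm_real, Real.norm_eq_abs, _root_.abs_of_nonneg hs.1]
    exact hs.2
  have hlm : Measurable logMinus := Real.measurable_log.neg.max measurable_const
  intro s₀ hs₀
  apply intervalIntegral.continuousWithinAt_of_dominated_interval
    (bound := fun θ => B * (C + ∑ a ∈ S, (m a : ℝ) *
      (logMinus (‖a‖) + logMinus |Real.sin (Complex.arg a - θ)|)))
  -- measurability
  · apply Filter.Eventually.mono eventually_mem_nhdsWithin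
    intro s hs
    have he : Continuous fun θ : ℝ => (s:ℂ) * Complex.exp ((θ:ℂ) * Complex.I) :=
      continuous_const.mul (Complex.continuous_exp.comp
        (Complex.continuous_ofReal.mul continuous_const))
    have hφm : Continuous fun θ : ℝ => φ ((s:ℂ) * Complex.exp ((θ:ℂ) * Complex.I)) :=
      hφ.comp_continuous he fun θ => hKb (hmemK s hs θ)
    have hfm : Continuous fun θ : ℝ => f ((s:ℂ) * Complex.exp ((θ:ℂ) * Complex.I)) :=
      hf.continuousOn.comp_continuous he fun θ => hKb (hmemK s hs θ)
    exact ((hφm.aestronglyMeasurable).mul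
      ((hlm.comp (continuous_norm.comp hfm).measurable).aestronglyMeasurable)).restrict
  -- domination
  · have hae : ∀ᵐ θ : ℝ, ∀ a ∈ S, m a ≠ 0 → Real.sin (Complex.arg a - θ) ≠ 0 := by
      rw [eventually_all_finset]
      intro a _
      rw [MeasureTheory.ae_iff]
      refine measure_mono_null ?_
        ((Set.countable_range fun n : ℤ => Complex.arg a - n * Real.pi).measure_zero _)
      intro θ hθ
      simp only [Set.mem_setOf_eq, Classical.not_imp, not_not] at hθ
      obtain ⟨n, hn⟩ := Real.sin_eq_zero_iff.mp hθ.2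
      refine ⟨n, ?_⟩
      show Complex.arg a - (n:ℝ) * Real.pi = θ
      linarith
    apply Filter.Eventually.mono eventually_mem_nhdsWithin
    intro s hs
    apply hae.mono
    intro θ hθ _
    set z : ℂ := (s:ℂ) * Complex.exp ((θ:ℂ) * Complex.I) with hz_def
    have hzK : z ∈ closedBall (0:ℂ) t := hmemK s hs θ
    show ‖φ z * logMinus (‖f z‖)‖ ≤ _
    rw [Real.norm_eq_abs, abs_mul, _root_.abs_of_nonneg (logMinus_nonneg _)]
    have h1 : |φ z| ≤ B := by
      have := hB z hzK
      rwa [Real.norm_eq_abs] at this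
    have h2 := hSbound z hzK
    have h3 : ∀ a ∈ S, (m a : ℝ) * logMinus (‖z - a‖) ≤
        (m a : ℝ) * (logMinus (‖a‖) + logMinus |Real.sin (Complex.arg a - θ)|) := by
      intro a haS
      rcases Nat.eq_zero_or_pos (m a) with hma | hma
      · simp [hma]
      have hma' : m a ≠ 0 := hma.ne'
      have ha0 : a ≠ 0 := hS0 a haS hma'
      have hsin : Real.sin (Complex.arg a - θ) ≠ 0 := hθ a haS hma'
      have haabs : 0 < ‖a‖ := norm_pos_iff.mpr ha0
      -- key geometric inequality
      have hee : Complex.exp ((θ:ℂ) * Complex.I) * Complex.exp (-((θ:ℂ) * Complex.I)) = 1 := by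
        rw [← Complex.exp_add, add_neg_cancel, Complex.exp_zero]
      have ha' : Complex.exp ((θ:ℂ) * Complex.I) * (a * Complex.exp (-((θ:ℂ) * Complex.I)))
          = a := by
        rw [show Complex.exp ((θ:ℂ) * Complex.I) * (a * Complex.exp (-((θ:ℂ) * Complex.I)))
          = a * (Complex.exp ((θ:ℂ) * Complex.I) * Complex.exp (-((θ:ℂ) * Complex.I))) from by
            ring, hee, mul_one]
      have hrw : z - a = Complex.exp ((θ:ℂ) * Complex.I) *
          ((s:ℂ) - a * Complex.exp (-((θ:ℂ) * Complex.I))) := by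
        rw [mul_sub, ha', hz_def]
        ring
      have habs1 : ‖z - a‖ =
          ‖(s:ℂ) - a * Complex.exp (-((θ:ℂ) * Complex.I))‖ := by
        rw [hrw, norm_mul, Complex.norm_exp_ofReal_mul_I, one_mul]
      have haim : (a * Complex.exp (-((θ:ℂ) * Complex.I))).im =
          ‖a‖ * Real.sin (Complex.arg a - θ) := by
        conv_lhs => rw [← Complex.norm_mul_exp_arg_mul_I a]
        rw [mul_assoc, ← Complex.exp_add]
        have hcast : (Complex.arg a : ℂ) * Complex.I + -((θ:ℂ) * Complex.I)
            = ((Complex.arg a - θ : ℝ) : ℂ) * Complex.I := by push_cast; ring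
        rw [hcast, Complex.mul_im, Complex.ofReal_re, Complex.ofReal_im,
          Complex.exp_ofReal_mul_I_im, zero_mul, add_zero]
      have key : ‖a‖ * |Real.sin (Complex.arg a - θ)| ≤ ‖z - a‖ := by
        have h5 : |((s:ℂ) - a * Complex.exp (-((θ:ℂ) * Complex.I))).im|
            ≤ ‖(s:ℂ) - a * Complex.exp (-((θ:ℂ) * Complex.I))‖ :=
          Complex.abs_im_le_norm _
        have h6 : ((s:ℂ) - a * Complex.exp (-((θ:ℂ) * Complex.I))).im
            = -(‖a‖ * Real.sin (Complex.arg a - θ)) := by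
          rw [Complex.sub_im, Complex.ofReal_im, haim]; ring
        rw [h6, abs_neg, abs_mul, _root_.abs_of_nonneg (norm_nonneg a)] at h5
        rw [habs1]
        exact h5
      have hkpos : 0 < ‖a‖ * |Real.sin (Complex.arg a - θ)| :=
        mul_pos haabs (abs_pos.mpr hsin)
      have h7 : logMinus (‖z - a‖) ≤
          logMinus (‖a‖ * |Real.sin (Complex.arg a - θ)|) := logMinus_anti hkpos key
      have h8 := logMinus_mul (x := ‖a‖) (y := |Real.sin (Complex.arg a - θ)|)
        haabs.ne' (abs_pos.mpr hsin).ne'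
      exact mul_le_mul_of_nonneg_left (h7.trans h8) (Nat.cast_nonneg _)
    have h4 := Finset.sum_le_sum h3
    calc |φ z| * logMinus (‖f z‖)
        ≤ B * (C + ∑ a ∈ S, (m a : ℝ) * logMinus (‖z - a‖)) :=
          mul_le_mul h1 h2 (logMinus_nonneg _) hB0
      _ ≤ B * (C + ∑ a ∈ S, (m a : ℝ) *
            (logMinus (‖a‖) + logMinus |Real.sin (Complex.arg a - θ)|)) := by
          apply mul_le_mul_of_nonneg_left _ hB0
          linarith
  -- integrability of the bound
  · have hsin_int : ∀ ca : ℝ, IntervalIntegrable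
        (fun θ => logMinus |Real.sin (ca - θ)|) volume 0 (2*Real.pi) := by
      intro ca
      have h1 := (intervalIntegrable_log_abs_sin ca (ca - 2*Real.pi)).comp_sub_left ca
      have h2 : IntervalIntegrable (fun x => Real.log |Real.sin (ca - x)|) volume 0 (2*Real.pi) := by
        simpa using h1
      have h3 : (fun θ => logMinus |Real.sin (ca - θ)|)
          = fun θ => -(Real.log |Real.sin (ca - θ)|) := funext fun θ => logMinus_abs_sin _
      rw [h3]
      exact h2.neg
    have hsum : IntervalIntegrable (fun θ => ∑ a ∈ S, (m a : ℝ) *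
        (logMinus (‖a‖) + logMinus |Real.sin (Complex.arg a - θ)|))
        volume 0 (2*Real.pi) := by
      have h9 := IntervalIntegrable.sum S (f := fun a θ => (m a : ℝ) *
        (logMinus (‖a‖) + logMinus |Real.sin (Complex.arg a - θ)|))
        (μ := volume) (a := 0) (b := 2*Real.pi)
        (fun a _ => (intervalIntegrable_const.add (hsin_int (Complex.arg a))).const_mul _)
      rw [Finset.sum_fn] at h9
      exact h9
    exact (intervalIntegrable_const.add hsum).const_mul _
  -- a.e. continuity in s
  · have hnull : ∀ᵐ θ : ℝ, θ ∈ Set.uIoc (0:ℝ) (2*Real.pi) →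
        f ((s₀:ℂ) * Complex.exp ((θ:ℂ) * Complex.I)) ≠ 0 := by
      rcases eq_or_lt_of_le hs₀.1 with hs0 | hs0
      · apply Filter.Eventually.of_forall
        intro θ _
        rw [← hs0]
        simpa using hf0'
      · rw [MeasureTheory.ae_iff]
        apply measure_mono_null (t := ⋃ a ∈ (S : Set ℂ), {θ : ℝ |
          θ ∈ Set.uIoc (0:ℝ) (2*Real.pi) ∧ (s₀:ℂ) * Complex.exp ((θ:ℂ) * Complex.I) = a})
        · intro θ hθ
          simp only [Set.mem_setOf_eq, Classical.not_imp, not_not] at hθ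
          obtain ⟨hI, hf0z⟩ := hθ
          have hzS := hSz _ (hmemK s₀ hs₀ θ) hf0z
          exact Set.mem_biUnion hzS ⟨hI, rfl⟩
        · apply (measure_biUnion_null_iff S.countable_toSet).mpr
          intro a _
          apply Set.Subsingleton.measure_zero
          intro θ₁ hθ₁ θ₂ hθ₂
          obtain ⟨hI₁, he₁⟩ := hθ₁
          obtain ⟨hI₂, he₂⟩ := hθ₂
          rw [Set.uIoc_of_le (by linarith : (0:ℝ) ≤ 2*Real.pi)] at hI₁ hI₂
          have hsne : ((s₀:ℂ)) ≠ 0 := Complex.ofReal_ne_zero.mpr hs0.ne'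
          have hexp : Complex.exp ((θ₁:ℂ) * Complex.I) = Complex.exp ((θ₂:ℂ) * Complex.I) :=
            mul_left_cancel₀ hsne (he₁.trans he₂.symm)
          obtain ⟨n, hn⟩ := Complex.exp_eq_exp_iff_exists_int.mp hexp
          have hn2 : ((θ₁ : ℝ) : ℂ) = ((θ₂ + n * (2 * Real.pi) : ℝ) : ℂ) := by
            apply mul_right_cancel₀ Complex.I_ne_zero
            rw [hn]
            push_cast
            ring
          have hθ1' : θ₁ = θ₂ + (n:ℝ) * (2 * Real.pi) := by exact_mod_cast hn2
          have hn0 : n = 0 := by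
            have hb1 : (n:ℝ) * (2 * Real.pi) < 2 * Real.pi := by
              have := hI₁.2; have := hI₂.1; linarith
            have hb2 : -(2 * Real.pi) < (n:ℝ) * (2 * Real.pi) := by
              have := hI₁.1; have := hI₂.2; linarith
            have h1 : (n:ℝ) < 1 := by nlinarith
            have h2 : (-1:ℝ) < (n:ℝ) := by nlinarith
            have h1' : n < 1 := by exact_mod_cast h1
            have h2' : -1 < n := by exact_mod_cast h2
            omega
          rw [hn0] at hθ1'
          simpa using hθ1'
    apply hnull.mono
    intro θ hθ hθI
    have hfz := hθ hθI
    have he : Continuous fun s : ℝ => (s:ℂ) * Complex.exp ((θ:ℂ) * Complex.I) :=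
      Complex.continuous_ofReal.mul continuous_const
    have hz₀b : ((s₀:ℂ) * Complex.exp ((θ:ℂ) * Complex.I)) ∈ ball (0:ℂ) 1 :=
      hKb (hmemK s₀ hs₀ θ)
    have hφc : ContinuousAt φ ((s₀:ℂ) * Complex.exp ((θ:ℂ) * Complex.I)) :=
      hφ.continuousAt (isOpen_ball.mem_nhds hz₀b)
    have hfc : ContinuousAt f ((s₀:ℂ) * Complex.exp ((θ:ℂ) * Complex.I)) :=
      hf.continuousOn.continuousAt (isOpen_ball.mem_nhds hz₀b)
    have habs0 : ‖f ((s₀:ℂ) * Complex.exp ((θ:ℂ) * Complex.I))‖ ≠ 0 := by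
      simpa using hfz
    have hgoal : ContinuousAt (fun s : ℝ => φ ((s:ℂ) * Complex.exp ((θ:ℂ) * Complex.I)) *
        logMinus (‖f ((s:ℂ) * Complex.exp ((θ:ℂ) * Complex.I))‖)) s₀ := by
      have c0 : ContinuousAt (fun s : ℝ => (s:ℂ) * Complex.exp ((θ:ℂ) * Complex.I)) s₀ :=
        he.continuousAt
      have c1 : ContinuousAt (φ ∘ fun s : ℝ => (s:ℂ) * Complex.exp ((θ:ℂ) * Complex.I)) s₀ :=
        ContinuousAt.comp (x := s₀) hφc c0
      have c2 : ContinuousAt (f ∘ fun s : ℝ => (s:ℂ) * Complex.exp ((θ:ℂ) * Complex.I)) s₀ :=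
        ContinuousAt.comp (x := s₀) hfc c0
      have c3 : ContinuousAt ((norm : ℂ → ℝ) ∘ (f ∘ fun s : ℝ =>
          (s:ℂ) * Complex.exp ((θ:ℂ) * Complex.I))) s₀ :=
        ContinuousAt.comp (x := s₀) continuous_norm.continuousAt c2
      have c4 : ContinuousAt (logMinus ∘ ((norm : ℂ → ℝ) ∘ (f ∘ fun s : ℝ =>
          (s:ℂ) * Complex.exp ((θ:ℂ) * Complex.I)))) s₀ :=
        ContinuousAt.comp (x := s₀) (continuousAt_logMinus habs0) c3
      exact ContinuousAt.mul c1 c4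
    exact hgoal.continuousWithinAt

end Aux

end
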